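/- Let (q,n) be a Dickson pair with n > 2 and consider the Dickson nearfield setup. Then for every α, β ∈ F, the set D(α,β) contains 0 and 1, is closed under addition, and is closed under multiplication by every element of the subfield {k ∈ F : k^q = k}; consequently there exists a positive integer k with |D(α,β)| = q^k. -/

import Mathlib

/-- `(q, n)` is a Dickson pair: `q` is a prime power, every prime divisor of `n`
divides `q - 1`, and if `q ≡ 3 (mod 4)` then `4` does not divide `n`. -/
def IsDicksonPair (q n : ℕ) : Prop :=
  0 < q ∧ 0 < n ∧ (∃ p l : ℕ, Nat.Prime p ∧ 0 < l ∧ q = p ^ l) ∧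
    (∀ p : ℕ, Nat.Prime p → p ∣ n → p ∣ q - 1) ∧ (q % 4 = 3 → ¬ 4 ∣ n)

/-- `[k]_q = 1 + q + q^2 + ⋯ + q^(k-1)`. -/
def dq (q k : ℕ) : ℕ := ∑ i ∈ Finset.range k, q ^ i

/-- `x` lies in the coset `g^([k]_q) • H` where `H = ⟨g^n⟩`. -/
def inCoset {F : Type*} [Field F] (g : F) (q n k : ℕ) (x : F) : Prop :=
  ∃ j : ℕ, x = g ^ dq q k * (g ^ n) ^ j

section DicksonAux

lemma dq_succ (q k : ℕ) : dq q (k+1) = dq q k + q ^ k := Finset.sum_range_succ _ _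

lemma dq_add (q a b : ℕ) : dq q (a+b) = dq q a + q ^ a * dq q b := by
  unfold dq
  rw [Finset.sum_range_add, Finset.mul_sum]
  congr 1
  exact Finset.sum_congr rfl fun i _ => (pow_add q a i)

lemma dq_mul (q a b : ℕ) : dq q (a*b) = dq q a * dq (q^a) b := by
  induction b with
  | zero => simp [dq]
  | succ b ih =>
      rw [Nat.mul_succ, dq_add, ih, dq_succ, ← pow_mul]
      ring

lemma dq_modeq (p q d : ℕ) (h : q ≡ 1 [MOD p]) : dq q d ≡ d [MOD p] := by
  induction d with
  | zero => simp [dq]; rfl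
  | succ d ih =>
      rw [dq_succ]
      calc dq q d + q ^ d ≡ d + 1 ^ d [MOD p] := ih.add (h.pow d)
        _ = d + 1 := by rw [one_pow]

lemma geom_aux (q k : ℕ) (hq : 1 ≤ q) : (q - 1) * dq q k + 1 = q ^ k := by
  induction k with
  | zero => simp [dq]
  | succ k ih =>
      rw [dq_succ, Nat.mul_add, pow_succ]
      have : q ^ k ≥ 1 := Nat.one_le_pow _ _ hq
      nlinarith [Nat.sub_add_cancel hq]

-- Q^i ≡ 1 + i*p*t mod p^2 when Q = 1 + p*t
lemma pow_one_add (p t : ℕ) (i : ℕ) : (1 + p*t) ^ i ≡ 1 + i*(p*t) [MOD p^2] := by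
  induction i with
  | zero => simpa using Nat.ModEq.refl 1
  | succ i ih =>
      have h1 : (1 + p*t) ^ (i+1) = (1+p*t)^i * (1+p*t) := pow_succ _ _
      have h2 : (1 + i*(p*t)) * (1+p*t) = 1 + (i+1)*(p*t) + p^2 * (i*t^2) := by ring
      calc (1 + p*t) ^ (i+1) ≡ (1 + i*(p*t)) * (1+p*t) [MOD p^2] := by
            rw [h1]; exact ih.mul_right _
        _ = 1 + (i+1)*(p*t) + p^2 * (i*t^2) := h2
        _ ≡ 1 + (i+1)*(p*t) + p^2 * 0 [MOD p^2] := by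
            exact Nat.ModEq.add_left _ ((Nat.modEq_zero_iff_dvd.2 ⟨_, rfl⟩))
        _ = 1 + (i+1)*(p*t) := by ring

lemma dq_aux (p t : ℕ) : ∀ k : ℕ, ∃ c : ℕ, dq (1+p*t) k ≡ k + p*t*c [MOD p^2] ∧ 2*c = k*(k-1)
  | 0 => ⟨0, by simpa [dq] using Nat.ModEq.refl 0, by simp⟩
  | (k+1) => by
      obtain ⟨c, hc, h2c⟩ := dq_aux p t k
      refine ⟨c + k, ?_, ?_⟩
      case refine_2 =>
        simp only [Nat.add_sub_cancel]
        cases k with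
        | zero => omega
        | succ j =>
            simp only [Nat.add_sub_cancel] at h2c
            nlinarith [h2c]
      rw [dq_succ]
      calc dq (1+p*t) k + (1+p*t)^k ≡ (k + p*t*c) + (1 + k*(p*t)) [MOD p^2] :=
            hc.add (pow_one_add p t k)
        _ = (k+1) + p*t*(c+k) := by ring

lemma dq_at_p (p : ℕ) (hp : p.Prime) (t : ℕ) (h2 : p = 2 → (1 + p*t) % 4 = 1) :
    ∃ m : ℕ, dq (1 + p*t) p = p * m ∧ ¬ p ∣ m := by
  have hmod : dq (1+p*t) p ≡ p [MOD p^2] := by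
    rcases hp.eq_two_or_odd' with h2' | hodd
    · -- p = 2
      subst h2'
      have ht : 2 ∣ t := by omega
      obtain ⟨t', rfl⟩ := ht
      show dq (1 + 2*(2*t')) 2 ≡ 2 [MOD 2^2]
      have he : dq (1 + 2*(2*t')) 2 = 2 + 2^2 * t' := by
        show (∑ i ∈ Finset.range 2, (1+2*(2*t'))^i) = 2 + 2^2*t'
        rw [Finset.sum_range_succ, Finset.sum_range_one]; ring
      rw [he]
      exact ((Nat.modEq_zero_iff_dvd.2 ⟨t', rfl⟩).add_left 2)
    · -- p odd
      obtain ⟨c, hc, h2c⟩ := dq_aux p t p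
      have hpc : p ∣ c := by
        have : p ∣ 2*c := ⟨p - 1, h2c⟩
        rcases (Nat.Prime.dvd_mul hp).1 this with h | h
        · exact absurd (((Nat.prime_dvd_prime_iff_eq hp Nat.prime_two).1 h)) (by rcases hodd with ⟨k,hk⟩; omega : p ≠ 2)
        · exact h
      obtain ⟨c', rfl⟩ := hpc
      calc dq (1+p*t) p ≡ p + p*t*(p*c') [MOD p^2] := hc
        _ = p + p^2*(t*c') := by ring
        _ ≡ p + p^2*0 [MOD p^2] := Nat.ModEq.add_left _ (Nat.modEq_zero_iff_dvd.2 ⟨_, rfl⟩)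
        _ = p := by ring
  -- from dq ≡ p mod p^2 with p < p^2, get exact division
  have hp1 : 1 < p := hp.one_lt
  have hpp : p < p^2 := by nlinarith
  have hmods : dq (1+p*t) p % p^2 = p := by
    rw [Nat.ModEq] at hmod
    rw [hmod, Nat.mod_eq_of_lt hpp]
  set X := dq (1+p*t) p / p^2 with hX
  have hdq : dq (1+p*t) p = p^2 * X + p := by
    conv_lhs => rw [← Nat.div_add_mod (dq (1+p*t) p) (p^2), hmods]
  refine ⟨p * X + 1, by rw [hdq]; ring, ?_⟩
  intro hdvd
  have : p ∣ 1 := (Nat.dvd_add_right ⟨_, rfl⟩).mp hdvd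
  exact Nat.Prime.one_lt hp |>.ne' (Nat.dvd_one.mp this)

/-- Key: if `p^e ∣ [d]_q` then `p^e ∣ d`. -/
lemma key_lemma (p : ℕ) (hp : p.Prime) (q : ℕ) (hq : q % p = 1)
    (h4 : p = 2 → q % 4 = 1) :
    ∀ e d : ℕ, 0 < d → p^e ∣ dq q d → p^e ∣ d := by
  intro e
  induction e with
  | zero => intro d _ _; simpa using Nat.one_dvd d
  | succ e ih =>
      intro d hd hdvd
      have hp1 : 1 < p := hp.one_lt
      have hqmod : q ≡ 1 [MOD p] := by
        show q % p = 1 % p; rw [hq, Nat.mod_eq_of_lt hp1]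
      -- p ∣ d
      have hpd : p ∣ d := by
        have h1 : p ∣ dq q d := dvd_trans (dvd_pow_self p (Nat.succ_ne_zero e)) hdvd
        have h2 : dq q d ≡ d [MOD p] := dq_modeq p q d hqmod
        have : d ≡ 0 [MOD p] := (h2.symm.trans (Nat.modEq_zero_iff_dvd.2 h1))
        exact Nat.modEq_zero_iff_dvd.1 this
      obtain ⟨d', rfl⟩ := hpd
      have hd' : 0 < d' := Nat.pos_of_ne_zero (fun h => by subst h; simp at hd)
      -- split dq q (p*d') = dq q d' * dq (q^d') p
      have hsplit : dq q (d' * p) = dq q d' * dq (q^d') p := dq_mul q d' p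
      -- q^d' = 1 + p * t
      have hQmod : q^d' % p = 1 := by
        have : q^d' ≡ 1 [MOD p] := by simpa using hqmod.pow d'
        rw [Nat.ModEq, Nat.mod_eq_of_lt hp1] at this; exact this
      have hQpos : 1 ≤ q^d' := Nat.one_le_pow _ _ (Nat.pos_of_ne_zero (fun h => by simp [h] at hq))
      have hQ : q^d' = 1 + p * (q^d' / p) := by
        conv_lhs => rw [← Nat.div_add_mod (q^d') p, hQmod]
        ring
      have h4' : p = 2 → (1 + p * (q^d'/p)) % 4 = 1 := by
        intro hp2
        rw [← hQ]
        have : q ≡ 1 [MOD 4] := by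
          show q % 4 = 1 % 4; rw [h4 hp2]
        have hq4 : q^d' ≡ 1 [MOD 4] := by simpa using this.pow d'
        rw [Nat.ModEq] at hq4; omega
      obtain ⟨m, hm, hpm⟩ := dq_at_p p hp (q^d'/p) h4'
      rw [← hQ] at hm
      -- p^(e+1) ∣ dq q d' * (p * m)
      rw [show p*d' = d'*p from Nat.mul_comm p d', dq_mul q d' p, hm] at hdvd
      have h5 : p^e ∣ dq q d' * m := by
        have h6 : p * p^e ∣ p * (dq q d' * m) := by
          have he1 : dq q d' * (p * m) = p * (dq q d' * m) := by ring
          rw [he1] at hdvd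
          have he2 : p * p^e = p^(e+1) := by ring
          rw [he2]; exact hdvd
        exact (Nat.mul_dvd_mul_iff_left (by omega : 0 < p)).1 h6
      have hcop : Nat.Coprime (p^e) m := Nat.Coprime.pow_left e (hp.coprime_iff_not_dvd.mpr hpm)
      have h7 : p^e ∣ dq q d' := hcop.dvd_of_dvd_mul_right h5
      have h8 : p^e ∣ d' := ih d' hd' h7
      have he3 : p^(e+1) = p * p^e := by ring
      rw [he3]
      exact mul_dvd_mul_left p h8

lemma one_add_pow (M c : ℕ) : ∃ K : ℕ, (1 + M)^c = 1 + c*M + M^2 * K := by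
  induction c with
  | zero => exact ⟨0, by ring⟩
  | succ c ih =>
      obtain ⟨K, hK⟩ := ih
      exact ⟨c + K + M*K, by rw [pow_succ, hK]; ring⟩

lemma pow_pow_modeq (p : ℕ) (hp : 2 ≤ p) (q : ℕ) (hq : q ≡ 1 [MOD p]) :
    ∀ j : ℕ, q ^ (p^j) ≡ 1 [MOD p^(j+1)] := by
  have hq0 : 0 < q := by
    rcases Nat.eq_zero_or_pos q with h|h
    · exfalso; subst h; rw [Nat.ModEq, Nat.zero_mod, Nat.mod_eq_of_lt hp] at hq; omega
    · exact h
  intro j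
  induction j with
  | zero => simpa using hq
  | succ j ih =>
      have hpos : 1 ≤ q ^ (p^j) := Nat.one_le_pow _ _ hq0
      -- q^(p^j) = 1 + p^(j+1) * s
      have hdvd : p^(j+1) ∣ q^(p^j) - 1 := (Nat.modEq_iff_dvd' hpos).1 ih.symm
      obtain ⟨s, hs⟩ := hdvd
      have hqs : q^(p^j) = 1 + p^(j+1) * s := by omega
      have hstep : q^(p^(j+1)) = (q^(p^j))^p := by rw [← pow_mul, pow_succ]
      obtain ⟨K, hK⟩ := one_add_pow (p^(j+1) * s) p
      rw [hstep, hqs, hK]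
      have h1 : p * (p^(j+1)*s) = p^(j+2) * s := by ring
      have h2 : (p^(j+1)*s)^2 * K = p^(j+2) * (p^j * s^2 * K) := by ring
      rw [h1, h2]
      calc 1 + p^(j+2)*s + p^(j+2)*(p^j*s^2*K)
          ≡ 1 + 0 + 0 [MOD p^(j+2)] :=
            ((Nat.ModEq.refl 1).add (Nat.modEq_zero_iff_dvd.2 ⟨_, rfl⟩)).add
              (Nat.modEq_zero_iff_dvd.2 ⟨_, rfl⟩)
        _ = 1 := by ring

/-- For a Dickson pair, `n ∣ q^n - 1` (more generally `n ∣ q^m - 1` whenever `n ∣ m`). -/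
lemma dickson_dvd_sub_one (q n : ℕ) (hq0 : 0 < q)
    (hdiv : ∀ p : ℕ, Nat.Prime p → p ∣ n → p ∣ q - 1) (hn : 0 < n) :
    n ∣ q^n - 1 := by
  have hqn1 : 1 ≤ q^n := Nat.one_le_pow _ _ hq0
  rcases Nat.eq_zero_or_pos (q^n - 1) with h0 | hpos
  ·
    rw [h0]; exact Dvd.intro 0 rfl
  rw [← Nat.factorization_le_iff_dvd (by omega) (by omega), Finsupp.le_def]
  intro p
  by_cases hp : p.Prime
  · by_cases hpn : p ∣ n
    · set e := n.factorization p with he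
      have hpe : p^e ∣ n := Nat.ordProj_dvd n p
      have hpq1 : p ∣ q - 1 := hdiv p hp hpn
      have hq1 : 1 ≤ q := hq0
      have hqmod : q ≡ 1 [MOD p] := ((Nat.modEq_iff_dvd' hq1).2 hpq1).symm
      -- q^(p^(e-1) * ...) : p^(e-1) ∣ n? We have p^e ∣ n so p^(e-1) ∣ n
      rcases Nat.eq_zero_or_pos e with he0 | hepos
      · simp [← he, he0]
      have hp1 : p^(e-1) ∣ n := dvd_trans (pow_dvd_pow p (by omega)) hpe
      obtain ⟨w, hw⟩ := hp1
      have : q^n ≡ 1 [MOD p^e] := by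
        have h := (pow_pow_modeq p hp.two_le q hqmod (e-1)).pow w
        rw [← pow_mul, ← hw, one_pow] at h
        have : e - 1 + 1 = e := by omega
        rw [this] at h; exact h
      have hdvd : p^e ∣ q^n - 1 := (Nat.modEq_iff_dvd' hqn1).1 this.symm
      exact (Nat.Prime.pow_dvd_iff_le_factorization hp (by omega)).1 hdvd
    · rw [Nat.factorization_eq_zero_of_not_dvd hpn]; exact Nat.zero_le _
  · rw [Nat.factorization_eq_zero_of_not_prime n hp]; exact Nat.zero_le _

/-- For a Dickson pair: `n ∣ [d]_q → n ∣ d`. -/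
lemma dickson_key (q n : ℕ) (hq0 : 2 ≤ q)
    (hdiv : ∀ p : ℕ, Nat.Prime p → p ∣ n → p ∣ q - 1) (h4 : q % 4 = 3 → ¬ 4 ∣ n)
    (d : ℕ) (hd : 0 < d) (hdvd : n ∣ dq q d) : n ∣ d := by
  rcases Nat.eq_zero_or_pos n with h0 | hn
  · exfalso
    subst h0
    have h1 : dq q d = 0 := Nat.zero_dvd.mp hdvd
    have h2 := geom_aux q d (by omega)
    have h3 : 1 < q ^ d := Nat.one_lt_pow (by omega) (by omega)
    rw [h1, Nat.mul_zero, Nat.zero_add] at h2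
    omega
  · rw [← Nat.factorization_le_iff_dvd (by omega) (by omega), Finsupp.le_def]
    intro p
    by_cases hp : p.Prime
    · by_cases hpn : p ∣ n
      · set e := n.factorization p with he
        have hpe : p^e ∣ n := Nat.ordProj_dvd n p
        have hpq1 : p ∣ q - 1 := hdiv p hp hpn
        have hqmod : q % p = 1 := by
          have h := (Nat.modEq_iff_dvd' (by omega : 1 ≤ q)).2 hpq1
          rw [Nat.ModEq, Nat.mod_eq_of_lt hp.one_lt] at h
          exact h.symm
        have hped : p^e ∣ dq q d := dvd_trans hpe hdvd
        have goal : p^e ∣ d → e ≤ d.factorization p := fun h =>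
          (Nat.Prime.pow_dvd_iff_le_factorization hp (by omega)).1 h
        apply goal
        by_cases hp2 : p = 2
        · -- p = 2
          rcases eq_or_ne (q % 4) 1 with hq4 | hq4
          · exact key_lemma p hp q hqmod (fun _ => hq4) e d hd hped
          · -- q % 4 = 3 (q odd), so e ≤ 1
            have hqodd : q % 2 = 1 := by rw [← hp2]; exact hqmod
            have hq43 : q % 4 = 3 := by omega
            have hn4 : ¬ 4 ∣ n := h4 hq43
            have he1 : e ≤ 1 := by
              by_contra hc
              exact hn4 (dvd_trans (by
                have : (4:ℕ) = 2^2 := by norm_num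
                rw [this, hp2] at *
                exact pow_dvd_pow 2 (by omega)) hpe)
            interval_cases e
            · simp
            · subst hp2
              have := dq_modeq 2 q d (by rw [Nat.ModEq, hqmod])
              rw [Nat.ModEq] at this
              have h2d : 2 ∣ dq q d := by
                have := hped; simpa using this
              simp only [pow_one]
              omega
        · exact key_lemma p hp q hqmod (fun h => absurd h hp2) e d hd hped
      · rw [Nat.factorization_eq_zero_of_not_dvd hpn]; exact Nat.zero_le _
    · rw [Nat.factorization_eq_zero_of_not_prime n hp]; exact Nat.zero_le _

/-- The map `k ↦ [k]_q mod n` hits every residue, with `k ∈ [1, n]`. -/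
lemma dq_surjective (q n : ℕ) (hq : 2 ≤ q) (hn : 0 < n)
    (hdiv : ∀ p : ℕ, Nat.Prime p → p ∣ n → p ∣ q - 1) (h4 : q % 4 = 3 → ¬ 4 ∣ n) :
    ∀ j : ℕ, ∃ k, 1 ≤ k ∧ k ≤ n ∧ dq q k ≡ j [MOD n] := by
  have hcop : Nat.Coprime n q := by
    rcases eq_or_ne (Nat.gcd n q) 1 with h | h
    · exact h
    · exfalso
      obtain ⟨p, hp, hpd⟩ := Nat.exists_prime_and_dvd h
      have hpn : p ∣ n := hpd.trans (Nat.gcd_dvd_left n q)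
      have hpq : p ∣ q := hpd.trans (Nat.gcd_dvd_right n q)
      have := Nat.dvd_sub hpq (hdiv p hp hpn)
      rw [show q - (q-1) = 1 by omega] at this
      exact hp.one_lt.ne' (Nat.dvd_one.mp this)
  set f : Fin n → Fin n := fun k => ⟨dq q (k+1) % n, Nat.mod_lt _ hn⟩ with hf
  have hinj : Function.Injective f := by
    have main : ∀ a b : Fin n, a ≤ b → f a = f b → a = b := by
      intro a b hab hfab
      have hmod : dq q ((a:ℕ)+1) ≡ dq q ((b:ℕ)+1) [MOD n] :=
        congrArg Fin.val hfab
      rcases eq_or_ne a b with h | h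
      · exact h
      · exfalso
        have hlt : (a:ℕ) < (b:ℕ) := lt_of_le_of_ne hab (fun hc => h (Fin.ext hc))
        have hsplit : dq q ((b:ℕ)+1) = dq q ((a:ℕ)+1) + q^((a:ℕ)+1) * dq q ((b:ℕ) - (a:ℕ)) := by
          rw [← dq_add]
          congr 1
          omega
        have h1 : n ∣ q^((a:ℕ)+1) * dq q ((b:ℕ) - (a:ℕ)) := by
          have h2 : dq q ((a:ℕ)+1) + 0 ≡ dq q ((a:ℕ)+1) + q^((a:ℕ)+1) * dq q ((b:ℕ) - (a:ℕ)) [MOD n] := by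
            rw [Nat.add_zero, ← hsplit]; exact hmod
          have := Nat.ModEq.add_left_cancel' (dq q ((a:ℕ)+1)) h2
          exact (Nat.modEq_zero_iff_dvd.1 this.symm)
        have h3 : n ∣ dq q ((b:ℕ) - (a:ℕ)) :=
          (Nat.Coprime.dvd_of_dvd_mul_left (hcop.pow_right _) h1)
        have h4' : n ∣ ((b:ℕ) - (a:ℕ) : ℕ) := dickson_key q n hq hdiv h4 _ (by omega) h3
        have := Nat.le_of_dvd (by omega) h4'
        omega
    intro a b hfab
    rcases le_total a b with h | h
    · exact main a b h hfab
    · exact (main b a h hfab.symm).symm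
  have hsurj : Function.Surjective f := Finite.surjective_of_injective hinj
  intro j
  obtain ⟨k, hk⟩ := hsurj ⟨j % n, Nat.mod_lt _ hn⟩
  refine ⟨(k:ℕ)+1, by omega, by omega, ?_⟩
  have : dq q ((k:ℕ)+1) % n = j % n := congrArg Fin.val hk
  calc dq q ((k:ℕ)+1) ≡ dq q ((k:ℕ)+1) % n [MOD n] := (Nat.mod_modEq _ _).symm
    _ = j % n := this
    _ ≡ j [MOD n] := Nat.mod_modEq _ _

end DicksonAux

/-- Dickson nearfield setup with `n > 2`: for every `α, β ∈ F` the set `D(α,β)`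
contains `0` and `1`, is closed under addition, is closed under multiplication by
elements of the subfield `{k : k^q = k}`, and has cardinality `q^k` for some
positive integer `k`. -/
theorem distributiveSet_card_pow_q {F : Type*} [Field F] [Fintype F]
    (q n : ℕ) (hqn : IsDicksonPair q n) (hn : 2 < n)
    (hcard : Fintype.card F = q ^ n)
    (g : F) (hg : ∀ x : F, x ≠ 0 → ∃ j : ℕ, x = g ^ j)
    (circ : F → F → F)
    (hcirc0 : ∀ lam : F, circ 0 lam = 0)
    (hcirc : ∀ k : ℕ, 1 ≤ k → k ≤ n → ∀ x : F, inCoset g q n k x →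
      ∀ lam : F, circ x lam = x * lam ^ q ^ k) :
    ∀ α β : F,
      (0 : F) ∈ {lam : F | circ (α + β) lam = circ α lam + circ β lam} ∧
      (1 : F) ∈ {lam : F | circ (α + β) lam = circ α lam + circ β lam} ∧
      (∀ lam₁ ∈ {lam : F | circ (α + β) lam = circ α lam + circ β lam},
        ∀ lam₂ ∈ {lam : F | circ (α + β) lam = circ α lam + circ β lam},
          lam₁ + lam₂ ∈ {lam : F | circ (α + β) lam = circ α lam + circ β lam}) ∧
      (∀ k : F, k ^ q = k →
        ∀ lam₀ ∈ {lam : F | circ (α + β) lam = circ α lam + circ β lam},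
          k * lam₀ ∈ {lam : F | circ (α + β) lam = circ α lam + circ β lam}) ∧
      ∃ k : ℕ, 0 < k ∧
        {lam : F | circ (α + β) lam = circ α lam + circ β lam}.ncard = q ^ k := by
  classical
  obtain ⟨hq0, hn0, ⟨p, l, hp, hl, hql⟩, hdiv, h4⟩ := hqn
  have hq2 : 2 ≤ q := by
    rw [hql]
    calc 2 ≤ p := hp.two_le
      _ = p^1 := (pow_one p).symm
      _ ≤ p^l := Nat.pow_le_pow_right hp.one_lt.le hl
  have hbig : 2 < q ^ n := by
    calc 2 < 2^n := by
          have : 2^1 < 2^n := Nat.pow_lt_pow_right (by omega) (by omega)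
          simpa using this
      _ ≤ q^n := Nat.pow_le_pow_left hq2 n
  -- there is an element distinct from 0 and 1
  have hx : ∃ x : F, x ≠ 0 ∧ x ≠ 1 := by
    by_contra hc
    push_neg at hc
    have hsub : (Finset.univ : Finset F) ⊆ {0, 1} := by
      intro x _
      rcases eq_or_ne x 0 with h | h
      · simp [h]
      · simp [hc x h]
    have := Finset.card_le_card hsub
    rw [Finset.card_univ, hcard] at this
    have h2 : ({0, 1} : Finset F).card ≤ 2 := Finset.card_insert_le _ _ |>.trans (by simp)
    omega
  have hgne : g ≠ 0 := by
    obtain ⟨x, hx0, hx1⟩ := hx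
    intro h
    obtain ⟨j, hj⟩ := hg x hx0
    subst h
    cases j with
    | zero => rw [pow_zero] at hj; exact hx1 hj
    | succ j => rw [zero_pow (Nat.succ_ne_zero j)] at hj; exact hx0 hj
  -- order of g
  set N := q^n - 1 with hN
  have hN7 : 2 ≤ N := by omega
  have hgN : g ^ N = 1 := by
    have := FiniteField.pow_card_sub_one_eq_one g hgne
    rwa [hcard] at this
  set gu : Fˣ := Units.mk0 g hgne with hgu
  have hzp : ∀ u : Fˣ, u ∈ Subgroup.zpowers gu := by
    intro u
    obtain ⟨j, hj⟩ := hg u (Units.ne_zero u)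
    refine ⟨(j:ℤ), ?_⟩
    ext
    show ((gu ^ (j:ℤ) : Fˣ) : F) = u
    rw [zpow_natCast, Units.val_pow_eq_pow_val, hgu, Units.val_mk0]
    exact hj.symm
  have hord : orderOf gu = N := by
    rw [orderOf_eq_card_of_forall_mem_zpowers hzp, Nat.card_units,
      Nat.card_eq_fintype_card, hcard]
  have hgpow : ∀ a b : ℕ, g ^ a = g ^ b ↔ a ≡ b [MOD N] := by
    intro a b
    rw [← hord, ← pow_eq_pow_iff_modEq]
    constructor
    · intro h; ext; simpa [Units.val_pow_eq_pow_val, hgu] using h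
    · intro h
      have := congrArg Units.val h
      simpa [Units.val_pow_eq_pow_val, hgu] using this
  have hnN : n ∣ N := dickson_dvd_sub_one q n (by omega) hdiv (by omega)
  -- coverage: representation of circ
  have cover : ∀ x : F, ∃ k : ℕ, 1 ≤ k ∧ k ≤ n ∧ ∀ lam : F, circ x lam = x * lam ^ q ^ k := by
    intro x
    rcases eq_or_ne x 0 with h | h
    · exact ⟨1, le_refl 1, by omega, fun lam => by rw [h, hcirc0, zero_mul]⟩
    · obtain ⟨j, hj⟩ := hg x h
      obtain ⟨k, hk1, hkn, hkmod⟩ := dq_surjective q n hq2 (by omega) hdiv h4 j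
      refine ⟨k, hk1, hkn, fun lam => hcirc k hk1 hkn x ?_ lam⟩
      -- x ∈ coset k
      set t := dq q k with ht
      have hge : t ≤ j + N * t := by nlinarith
      have hdvd : n ∣ j + N * t - t := by
        have h1 : t ≡ j [MOD n] := hkmod
        have h2 : (j + N * t) ≡ j + 0 * t [MOD n] := by
          exact Nat.ModEq.add_left j (Nat.ModEq.mul_right t (Nat.modEq_zero_iff_dvd.2 hnN))
        -- j + N*t ≡ j ≡ t mod n
        have h3 : j + N * t ≡ t [MOD n] := by
          calc j + N*t ≡ j + 0*t [MOD n] := h2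
            _ = j := by ring
            _ ≡ t [MOD n] := h1.symm
        exact (Nat.modEq_iff_dvd' hge).1 h3.symm
      obtain ⟨m, hm⟩ := hdvd
      refine ⟨m, ?_⟩
      have hexp : t + n * m = j + N * t := by omega
      rw [hj, ← pow_mul, ← pow_add, hexp]
      rw [pow_add, pow_mul, hgN, one_pow, mul_one]
  -- characteristic
  haveI hfact : Fact p.Prime := ⟨hp⟩
  have hcharF : CharP F p := by
    haveI h0 : CharP F (ringChar F) := ringChar.charP F
    have hrp : (ringChar F).Prime := CharP.char_is_prime F (ringChar F)
    obtain ⟨m, _, hcm⟩ := FiniteField.card F (ringChar F)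
    have hpq : p ^ (l*n) = ringChar F ^ (m:ℕ) := by
      rw [pow_mul, ← hql, ← hcard, hcm]
    have hpd : p ∣ ringChar F ^ (m:ℕ) := by
      rw [← hpq]
      exact dvd_pow_self p (by positivity)
    have : p = ringChar F := (Nat.prime_dvd_prime_iff_eq hp hrp).1 (hp.dvd_of_dvd_pow hpd)
    rwa [this]
  haveI := hcharF
  have hfrob : ∀ (x y : F) (i : ℕ), (x+y)^(q^i) = x^(q^i) + y^(q^i) := by
    intro x y i
    rw [hql, ← pow_mul]
    exact add_pow_char_pow x y p (l*i)
  have hfix : ∀ (k : F), k ^ q = k → ∀ i : ℕ, k ^ q ^ i = k := by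
    intro k hk i
    induction i with
    | zero => rw [pow_zero, pow_one]
    | succ i ih => rw [pow_succ, pow_mul, ih, hk]
  -- the subfield of elements fixed by x ↦ x^q
  set E : Subfield F :=
    { carrier := {x : F | x ^ q = x}
      mul_mem' := fun {x y} hx hy => by
        simp only [Set.mem_setOf_eq] at *
        rw [mul_pow, hx, hy]
      one_mem' := by simp only [Set.mem_setOf_eq, one_pow]
      add_mem' := fun {x y} hx hy => by
        simp only [Set.mem_setOf_eq] at *
        have hxy := hfrob x y 1
        rw [pow_one] at hxy
        rw [hxy, hx, hy]
      zero_mem' := by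
        simp only [Set.mem_setOf_eq]
        exact zero_pow (by omega)
      neg_mem' := fun {x} hx => by
        simp only [Set.mem_setOf_eq] at *
        have h := hfrob x (-x) 1
        rw [pow_one, add_neg_cancel] at h
        have h0 : (0:F) ^ q = 0 := zero_pow (by omega)
        rw [h0] at h
        have : (-x)^q = -(x^q) := (neg_eq_of_add_eq_zero_right h.symm).symm
        rw [this, hx]
      inv_mem' := fun x hx => by
        simp only [Set.mem_setOf_eq] at *
        rw [inv_pow, hx] } with hE
  have hEmem : ∀ x : F, x ∈ E ↔ x ^ q = x := fun x => Iff.rfl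
  intro α β
  obtain ⟨a, _, _, hA⟩ := cover α
  obtain ⟨b, _, _, hB⟩ := cover β
  obtain ⟨c, _, _, hC⟩ := cover (α+β)
  have hmem : ∀ lam : F, circ (α + β) lam = circ α lam + circ β lam ↔
      (α+β) * lam^(q^c) = α*lam^(q^a) + β*lam^(q^b) := fun lam => by
    rw [hA, hB, hC]
  -- the distributive set as a submodule over E
  set D : Submodule ↥E F :=
    { carrier := {lam : F | (α+β) * lam^(q^c) = α*lam^(q^a) + β*lam^(q^b)}
      add_mem' := fun {x y} hx hy => by
        simp only [Set.mem_setOf_eq] at *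
        rw [hfrob x y c, hfrob x y a, hfrob x y b]
        linear_combination hx + hy
      zero_mem' := by
        simp only [Set.mem_setOf_eq]
        rw [zero_pow (pow_ne_zero c (by omega)), zero_pow (pow_ne_zero a (by omega)),
          zero_pow (pow_ne_zero b (by omega))]
        ring
      smul_mem' := fun k x hx => by
        simp only [Set.mem_setOf_eq] at *
        rw [show k • x = (k:F) * x from rfl, mul_pow, mul_pow, mul_pow,
          hfix (k:F) k.2 c, hfix (k:F) k.2 a, hfix (k:F) k.2 b]
        linear_combination (k:F) * hx } with hD
  have hmemD : ∀ lam : F, lam ∈ D ↔ (α+β) * lam^(q^c) = α*lam^(q^a) + β*lam^(q^b) :=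
    fun lam => Iff.rfl
  have h1D : (1:F) ∈ D := by
    rw [hmemD, one_pow, one_pow, one_pow, mul_one, mul_one, mul_one]
  refine ⟨?_, ?_, ?_, ?_, ?_⟩
  · show circ (α + β) 0 = circ α 0 + circ β 0
    rw [hmem]
    exact (hmemD 0).1 D.zero_mem
  · show circ (α + β) 1 = circ α 1 + circ β 1
    rw [hmem]
    exact (hmemD 1).1 h1D
  · intro x hx' y hy'
    have hx2 : x ∈ D := (hmemD x).2 ((hmem x).1 hx')
    have hy2 : y ∈ D := (hmemD y).2 ((hmem y).1 hy')
    show circ (α + β) (x+y) = circ α (x+y) + circ β (x+y)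
    rw [hmem]
    exact (hmemD _).1 (D.add_mem hx2 hy2)
  · intro k hk x hx'
    have hx2 : x ∈ D := (hmemD x).2 ((hmem x).1 hx')
    show circ (α + β) (k*x) = circ α (k*x) + circ β (k*x)
    rw [hmem]
    have := D.smul_mem (⟨k, (hEmem k).2 hk⟩ : ↥E) hx2
    simp only [smul_eq_mul, Subfield.smul_def] at this
    exact (hmemD _).1 this
  · -- cardinality
    -- count the subfield E : it has exactly q elements
    set M := dq q n with hM
    have hNM : N = (q-1) * M := by
      have hga := geom_aux q n (by omega)
      rw [← hM] at hga
      omega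
    have hMpos : 0 < M := by
      rcases Nat.eq_zero_or_pos M with h | h
      · rw [h, Nat.mul_zero] at hNM; omega
      · exact h
    set φ : Fin (q-1) → F := fun i => g ^ (M * (i:ℕ)) with hφ
    have hφE : ∀ i, φ i ∈ E := by
      intro i
      rw [hEmem, ← pow_mul, hgpow]
      have hle : M * (i:ℕ) ≤ M * (i:ℕ) * q := Nat.le_mul_of_pos_right _ (by omega)
      refine ((Nat.modEq_iff_dvd' hle).2 ⟨(i:ℕ), ?_⟩).symm
      have : M * (i:ℕ) * q = M * (i:ℕ) + N * (i:ℕ) := by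
        rw [hNM]
        cases q with
        | zero => omega
        | succ q' => simp only [Nat.succ_sub_one]; ring
      omega
    have hφinj : Function.Injective φ := by
      intro i i' heq
      rw [hφ] at heq
      have hmd : M * (i:ℕ) ≡ M * (i':ℕ) [MOD N] := (hgpow _ _).1 heq
      have hlt : ∀ j : Fin (q-1), M * (j:ℕ) < N := by
        intro j
        rw [hNM]
        calc M * (j:ℕ) < M * (q-1) := (Nat.mul_lt_mul_left hMpos).2 j.2
          _ = (q-1) * M := Nat.mul_comm _ _
      have := hmd
      rw [Nat.ModEq, Nat.mod_eq_of_lt (hlt i), Nat.mod_eq_of_lt (hlt i')] at this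
      exact Fin.ext (Nat.eq_of_mul_eq_mul_left hMpos this)
    have hEset : (E : Set F) = insert (0:F) (Set.range φ) := by
      ext x
      constructor
      · intro hxE
        have hxq : x ^ q = x := hxE
        rcases eq_or_ne x 0 with h | h
        · exact Set.mem_insert_iff.2 (Or.inl h)
        · refine Set.mem_insert_of_mem _ ?_
          have hx1 : x ^ (q-1) = 1 := by
            have hsp : x ^ ((q-1)+1) = x ^ (q-1) * x := pow_succ x (q-1)
            rw [show (q-1)+1 = q by omega, hxq] at hsp
            have : x ^ (q-1) * x = 1 * x := by rw [← hsp, one_mul]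
            exact mul_right_cancel₀ h this
          obtain ⟨j, hj⟩ := hg x h
          have hj1 : g ^ (j * (q-1)) = g ^ 0 := by
            rw [pow_mul, ← hj, hx1, pow_zero]
          have hNdvd : N ∣ j * (q-1) := by
            have := (hgpow _ _).1 hj1
            simpa using (Nat.modEq_zero_iff_dvd.1 this)
          obtain ⟨w, hw⟩ := hNdvd
          have hjMw : j = M * w := by
            apply Nat.eq_of_mul_eq_mul_right (show 0 < q-1 by omega)
            rw [hw, hNM]
            ring
          refine ⟨⟨w % (q-1), Nat.mod_lt _ (by omega)⟩, ?_⟩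
          show g ^ (M * (w % (q-1))) = x
          rw [hj, hjMw]
          rw [hgpow]
          have : M * (w % (q-1)) ≡ M * w [MOD M * (q-1)] :=
            Nat.ModEq.mul_left' M (Nat.mod_modEq w (q-1))
          rwa [show M * (q-1) = N by rw [hNM]; ring] at this
      · intro hx
        rcases Set.mem_insert_iff.1 hx with h | ⟨i, hi⟩
        · rw [h]
          exact E.zero_mem
        · rw [← hi]
          exact hφE i
    letI : Fintype ↥E := Fintype.ofFinite _
    letI : Fintype ↥D := Fintype.ofFinite _
    have hcardE : Fintype.card ↥E = q := by
      have h1 : Nat.card ↥E = (E : Set F).ncard := by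
        rw [← Nat.card_coe_set_eq]
        exact Nat.card_congr (Equiv.subtypeEquivRight (fun x => by simp [SetLike.mem_coe]))
      have h2 : (E : Set F).ncard = q := by
        rw [hEset, Set.ncard_insert_of_notMem (by
          rintro ⟨i, hi⟩
          exact pow_ne_zero _ hgne hi)]
        rw [← Set.image_univ, Set.ncard_image_of_injective _ hφinj, Set.ncard_univ,
          Nat.card_eq_fintype_card, Fintype.card_fin]
        omega
      rw [← Nat.card_eq_fintype_card, h1, h2]
    have hcardD := Module.card_eq_pow_finrank (K := ↥E) (V := ↥D)
    rw [hcardE] at hcardD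
    set r := Module.finrank ↥E ↥D with hr
    have hrpos : 0 < r := by
      rcases Nat.eq_zero_or_pos r with h | h
      · exfalso
        rw [h, pow_zero] at hcardD
        have : Nontrivial ↥D := ⟨⟨1, h1D⟩, ⟨0, D.zero_mem⟩, fun hcon =>
          one_ne_zero (congrArg Subtype.val hcon)⟩
        have := Fintype.one_lt_card (α := ↥D)
        omega
      · exact h
    refine ⟨r, hrpos, ?_⟩
    have hsetD : {lam : F | circ (α + β) lam = circ α lam + circ β lam} = (D : Set F) := by
      ext lam
      rw [Set.mem_setOf_eq, hmem lam, SetLike.mem_coe, hmemD]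
    have hfin : Nat.card ↥(D : Set F) = Nat.card ↥D :=
      Nat.card_congr (Equiv.subtypeEquivRight (fun x => by simp [SetLike.mem_coe]))
    rw [hsetD, ← Nat.card_coe_set_eq, hfin, Nat.card_eq_fintype_card, hcardD]
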